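/- Let M be a pointed metric space and suppose (gₙ) is a sequence in SNA(M) isometrically equivalent to the canonical basis of ℓ₁ (i.e., ‖Σₙ aₙ gₙ‖ = Σₙ |aₙ| for all (aₙ) ∈ ℓ₁, and each nonzero ℓ₁-combination lies in SNA(M)). If f = Σₙ aₙ gₙ satisfies (f(q)-f(p))/d(p,q) = ‖f‖ for distinct points p, q, then for every index n with aₙ ≠ 0 one has (gₙ(q)-gₙ(p))/d(p,q) = sign(aₙ). Consequently, if (aₙ) has at least two nonzero entries a_i, a_j and (bₙ) is obtained from (aₙ) by flipping the sign of a_j only, then g = Σₙ bₙ gₙ does not strongly attain its norm at the pair (p,q) (in either order). -/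

import Mathlib

open Filter Metric MeasureTheory

noncomputable def lipNorm {M : Type*} [MetricSpace M] (f : M → ℝ) : ℝ :=
  sSup {r : ℝ | ∃ p q : M, p ≠ q ∧ r = |f q - f p| / dist p q}

noncomputable def pnormAt {M : Type*} [MetricSpace M] (f : M → ℝ) (p : M) : ℝ :=
  sSup {r : ℝ | ∃ q : M, q ≠ p ∧ r = |f q - f p| / dist p q}

/-- `f` strongly attains its (Lipschitz) norm. -/
def StronglyAttains {M : Type*} [MetricSpace M] (f : M → ℝ) : Prop :=
  ∃ p q : M, p ≠ q ∧ |f q - f p| / dist p q = lipNorm f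

/-- `f` attains its pointwise norm. -/
def PointwiseAttains {M : Type*} [MetricSpace M] (f : M → ℝ) : Prop :=
  ∃ p : M, pnormAt f p = lipNorm f

/-- if (gₙ) ⊆ SNA(M) is isometrically equivalent to the ℓ₁-basis and
f = Σ aₙ gₙ satisfies S(f,p,q) = ‖f‖, then S(gₙ,p,q) = sign(aₙ) whenever aₙ ≠ 0;
consequently flipping the sign of one nonzero coefficient destroys strong attainment
at the pair (p,q) (in either order). -/
theorem stmt17 {M : Type*} [MetricSpace M] (z : M)
    (g : ℕ → M → ℝ) (hg0 : ∀ n, g n z = 0)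
    (hiso : ∀ b : ℕ → ℝ, Summable (fun n => |b n|) → b ≠ 0 →
      lipNorm (fun x => ∑' n, b n * g n x) = (∑' n, |b n|) ∧
      StronglyAttains (fun x => ∑' n, b n * g n x))
    (a : ℕ → ℝ) (ha : Summable fun n => |a n|)
    (p q : M) (hpq : p ≠ q)
    (hatt : ((∑' n, a n * g n q) - (∑' n, a n * g n p)) / dist p q =
      lipNorm (fun x => ∑' n, a n * g n x)) :
    (∀ n, a n ≠ 0 → (g n q - g n p) / dist p q = Real.sign (a n)) ∧
    (∀ i j, i ≠ j → a i ≠ 0 → a j ≠ 0 →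
      ∀ b : ℕ → ℝ, b = Function.update a j (-(a j)) →
        |(∑' n, b n * g n q) - (∑' n, b n * g n p)| / dist p q ≠
          lipNorm (fun x => ∑' n, b n * g n x)) := by
  have hd : (0:ℝ) < dist p q := dist_pos.mpr hpq
  set d := dist p q with hdd
  -- positivity of tsum of abs for nonzero c
  have hpos : ∀ (c : ℕ → ℝ), Summable (fun n => |c n|) → c ≠ 0 → 0 < ∑' n, |c n| := by
    intro c hc hne
    obtain ⟨n0, hn0⟩ : ∃ n, c n ≠ 0 := by
      by_contra h; push_neg at h; exact hne (funext h)
    have h1 : |c n0| ≤ ∑' n, |c n| := Summable.le_tsum hc n0 fun j _ => abs_nonneg _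
    exact lt_of_lt_of_le (abs_pos.mpr hn0) h1
  -- key bound: any quotient is ≤ lipNorm when lipNorm is the tsum (positive)
  have key : ∀ (c : ℕ → ℝ), Summable (fun n => |c n|) → c ≠ 0 → ∀ x y : M, x ≠ y →
      |(∑' n, c n * g n y) - (∑' n, c n * g n x)| / dist x y ≤ ∑' n, |c n| := by
    intro c hc hne x y hxy
    obtain ⟨hnorm, -⟩ := hiso c hc hne
    set S := {r : ℝ | ∃ p q : M, p ≠ q ∧
      r = |(∑' n, c n * g n q) - (∑' n, c n * g n p)| / dist p q}
    have hmem : |(∑' n, c n * g n y) - (∑' n, c n * g n x)| / dist x y ∈ S :=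
      ⟨x, y, hxy, rfl⟩
    have hbdd : BddAbove S := by
      by_contra hb
      have h0 := Real.sSup_of_not_bddAbove hb
      rw [show sSup S = lipNorm (fun x => ∑' n, c n * g n x) from rfl, hnorm] at h0
      exact absurd h0 (ne_of_gt (hpos c hc hne))
    calc |(∑' n, c n * g n y) - (∑' n, c n * g n x)| / dist x y ≤ sSup S := le_csSup hbdd hmem
      _ = ∑' n, |c n| := hnorm
  -- each g n is 1-Lipschitz
  have hLip : ∀ n (x y : M), |g n y - g n x| ≤ dist x y := by
    intro n x y
    rcases eq_or_ne x y with rfl | hxy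
    · simp
    · set e : ℕ → ℝ := fun m => if m = n then (1:ℝ) else 0 with he
      have hes : Summable (fun m => |e m|) := by
        apply summable_of_ne_finset_zero (s := {n})
        intro m hm
        simp only [Finset.mem_singleton] at hm
        simp [he, hm]
      have hene : e ≠ 0 := by
        intro h
        have := congrFun h n
        simp [he] at this
      have h1 := key e hes hene x y hxy
      have h2 : ∀ w : M, (∑' m, e m * g m w) = g n w := by
        intro w
        rw [tsum_eq_single n (fun m hm => by simp [he, hm])]
        simp [he]
      have h3 : (∑' m, |e m|) = 1 := by
        rw [tsum_eq_single n (fun m hm => by simp [he, hm])]; simp [he]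
      rw [h2, h2, h3, div_le_one (dist_pos.mpr hxy)] at h1
      exact h1
  have hgb : ∀ n (x : M), |g n x| ≤ dist z x := by
    intro n x
    have := hLip n z x
    simpa [hg0 n] using this
  -- summability of coefficient sums
  have hsumm : ∀ (c : ℕ → ℝ), Summable (fun m => |c m|) → ∀ x : M,
      Summable (fun m => c m * g m x) := by
    intro c hc x
    apply Summable.of_norm_bounded (g := fun m => |c m| * dist z x) (hc.mul_right _)
    intro m
    rw [Real.norm_eq_abs, abs_mul]
    exact mul_le_mul_of_nonneg_left (hgb m x) (abs_nonneg _)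
  have hdiff : ∀ (c : ℕ → ℝ), Summable (fun m => |c m|) →
      (∑' m, c m * g m q) - (∑' m, c m * g m p) = ∑' m, c m * (g m q - g m p) := by
    intro c hc
    rw [← Summable.tsum_sub (hsumm c hc q) (hsumm c hc p)]
    congr 1; funext m; ring
  have hΔsumm : ∀ (c : ℕ → ℝ), Summable (fun m => |c m|) →
      Summable (fun m => c m * (g m q - g m p)) := by
    intro c hc
    exact ((hsumm c hc q).sub (hsumm c hc p)).congr (fun m => by ring)
  -- the attained sum equality
  have hXa : (∑' m, a m * (g m q - g m p)) = d * ∑' m, |a m| := by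
    rcases eq_or_ne a 0 with rfl | hane
    · simp
    obtain ⟨hnorm, -⟩ := hiso a ha hane
    rw [hnorm, div_eq_iff hd.ne'] at hatt
    rw [← hdiff a ha, hatt]; ring
  -- Part 1
  have part1 : ∀ n, a n ≠ 0 → (g n q - g n p) / d = Real.sign (a n) := by
    intro n hn
    have hsummh : Summable (fun m => |a m| * d - a m * (g m q - g m p)) :=
      (ha.mul_right d).sub (hΔsumm a ha)
    have hnonneg : ∀ m, 0 ≤ |a m| * d - a m * (g m q - g m p) := by
      intro m
      have hb : a m * (g m q - g m p) ≤ |a m| * d := by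
        calc a m * (g m q - g m p) ≤ |a m * (g m q - g m p)| := le_abs_self _
          _ = |a m| * |g m q - g m p| := abs_mul _ _
          _ ≤ |a m| * d := mul_le_mul_of_nonneg_left (hLip m p q) (abs_nonneg _)
      linarith
    have htsumh : (∑' m, (|a m| * d - a m * (g m q - g m p))) = 0 := by
      rw [Summable.tsum_sub (ha.mul_right d) (hΔsumm a ha), tsum_mul_right, hXa]; ring
    have hzero : |a n| * d - a n * (g n q - g n p) = 0 := by
      have hle : |a n| * d - a n * (g n q - g n p) ≤ 0 := by
        rw [← htsumh]
        exact Summable.le_tsum hsummh n (fun j _ => hnonneg j)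
      linarith [hnonneg n]
    have heq : g n q - g n p = |a n| * d / a n := by
      rw [eq_div_iff hn]; linarith
    rw [heq]
    rcases hn.lt_or_gt with hlt | hgt
    · rw [abs_of_neg hlt, Real.sign_of_neg hlt]
      field_simp
    · rw [abs_of_pos hgt, Real.sign_of_pos hgt]
      field_simp
  refine ⟨part1, ?_⟩
  -- Part 2
  intro i j hij hi hj b hb
  have hbi : b i = a i := by rw [hb, Function.update_of_ne hij]
  have hbne : b ≠ 0 := by
    intro h; rw [h] at hbi; exact hi (by simpa using hbi.symm)
  have habs : ∀ n, |b n| = |a n| := by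
    intro n
    rcases eq_or_ne n j with rfl | hnj
    · rw [hb, Function.update_self, abs_neg]
    · rw [hb, Function.update_of_ne hnj]
  have hbsum : Summable (fun n => |b n|) := ha.congr (fun n => (habs n).symm)
  obtain ⟨hbnorm, -⟩ := hiso b hbsum hbne
  have htb : (∑' n, |b n|) = ∑' n, |a n| := tsum_congr habs
  have hΔj : g j q - g j p = d * Real.sign (a j) := by
    have h1 := part1 j hj
    rw [div_eq_iff hd.ne'] at h1
    exact h1.trans (mul_comm _ _)
  have hsgn : a j * Real.sign (a j) = |a j| := by
    rcases hj.lt_or_gt with h | h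
    · rw [Real.sign_of_neg h, abs_of_neg h]; ring
    · rw [Real.sign_of_pos h, abs_of_pos h]; ring
  have hajΔ : a j * (g j q - g j p) = |a j| * d := by
    rw [hΔj]
    calc a j * (d * Real.sign (a j)) = (a j * Real.sign (a j)) * d := by ring
      _ = |a j| * d := by rw [hsgn]
  have hsplit : (∑' n, a n * (g n q - g n p)) - (∑' n, b n * (g n q - g n p))
      = 2 * (a j * (g j q - g j p)) := by
    rw [← Summable.tsum_sub (hΔsumm a ha) (hΔsumm b hbsum)]
    rw [tsum_eq_single j (fun m hm => by rw [hb, Function.update_of_ne hm]; ring)]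
    rw [hb, Function.update_self]; ring
  have hbΔ : (∑' n, b n * (g n q - g n p)) = d * ((∑' n, |a n|) - 2 * |a j|) := by
    rw [hXa, hajΔ] at hsplit
    linarith
  have hij2 : |a i| + |a j| ≤ ∑' n, |a n| := by
    have h1 := Summable.sum_le_tsum ({i, j} : Finset ℕ) (fun m _ => abs_nonneg (a m)) ha
    rwa [Finset.sum_insert (by simp [hij]), Finset.sum_singleton] at h1
  have habsj : (0:ℝ) < |a j| := abs_pos.mpr hj
  have habsi : (0:ℝ) < |a i| := abs_pos.mpr hi
  have hTbound : abs ((∑' n, |a n|) - 2 * |a j|) < ∑' n, |a n| := by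
    rw [abs_lt]; constructor <;> nlinarith
  rw [hdiff b hbsum, hbΔ, hbnorm, htb, abs_mul, abs_of_pos hd,
    mul_comm d, mul_div_assoc, div_self hd.ne', mul_one]
  exact ne_of_lt hTbound
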